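/- Let d ≥ 1 and let A and B be Hermitian d×d complex matrices. Then Tr(e^A) and Tr(e^B) are positive real numbers and |log Tr(e^A) − log Tr(e^B)| ≤ ‖A − B‖, where log is the real logarithm and ‖·‖ denotes the ℓ²-operator norm on matrices. -/

import Mathlib

open scoped Matrix.Norms.L2Operator
open NormedSpace Matrix

namespace TraceExpAux

variable {d : ℕ}

lemma exp_herm_eq (B : Matrix (Fin d) (Fin d) ℂ) (hB : B.IsHermitian) :
    exp B = (hB.eigenvectorUnitary : Matrix (Fin d) (Fin d) ℂ) *
      diagonal (fun j => (Real.exp (hB.eigenvalues j) : ℂ)) *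
      star (hB.eigenvectorUnitary : Matrix (Fin d) (Fin d) ℂ) := by
  set V : Matrix (Fin d) (Fin d) ℂ := (hB.eigenvectorUnitary : Matrix (Fin d) (Fin d) ℂ)
  have hV : IsUnit V := ⟨Unitary.toUnits hB.eigenvectorUnitary, rfl⟩
  have hinv : V⁻¹ = star V :=
    Matrix.inv_eq_left_inv ((Matrix.mem_unitaryGroup_iff').mp hB.eigenvectorUnitary.2)
  conv_lhs => rw [hB.spectral_theorem, Unitary.conjStarAlgAut_apply, ← hinv,
    Matrix.exp_conj _ _ hV]
  rw [hinv, Matrix.exp_diagonal]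
  have : exp (RCLike.ofReal ∘ hB.eigenvalues) =
      fun j => ((Real.exp (hB.eigenvalues j)) : ℂ) := by
    funext j
    rw [Pi.coe_exp, Function.comp_apply, ← Complex.exp_eq_exp_ℂ]
    simp [Complex.ofReal_exp, RCLike.ofReal]
  rw [this]

lemma trace_exp_herm (B : Matrix (Fin d) (Fin d) ℂ) (hB : B.IsHermitian) :
    Matrix.trace (exp B) = ((∑ j, Real.exp (hB.eigenvalues j) : ℝ) : ℂ) := by
  rw [exp_herm_eq B hB, Matrix.trace_mul_cycle,
    (Matrix.mem_unitaryGroup_iff').mp hB.eigenvectorUnitary.2, one_mul, Matrix.trace_diagonal]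
  push_cast
  rfl


lemma conj_entry (U V : Matrix.unitaryGroup (Fin d) ℂ) (f : Fin d → ℝ) (i : Fin d) :
    (star (U : Matrix (Fin d) (Fin d) ℂ) *
        ((V : Matrix (Fin d) (Fin d) ℂ) * diagonal (fun j => (f j : ℂ)) *
          star (V : Matrix (Fin d) (Fin d) ℂ)) * (U : Matrix (Fin d) (Fin d) ℂ)) i i
      = ((∑ j, Complex.normSq ((star (U : Matrix (Fin d) (Fin d) ℂ) *
          (V : Matrix (Fin d) (Fin d) ℂ)) i j) * f j : ℝ) : ℂ) := by
  set W : Matrix (Fin d) (Fin d) ℂ :=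
    star (U : Matrix (Fin d) (Fin d) ℂ) * (V : Matrix (Fin d) (Fin d) ℂ) with hWdef
  have h1 : star (U : Matrix (Fin d) (Fin d) ℂ) *
        ((V : Matrix (Fin d) (Fin d) ℂ) * diagonal (fun j => (f j : ℂ)) *
          star (V : Matrix (Fin d) (Fin d) ℂ)) * (U : Matrix (Fin d) (Fin d) ℂ)
      = W * diagonal (fun j => (f j : ℂ)) * star W := by
    simp only [hWdef, StarMul.star_mul, star_star, Matrix.mul_assoc]
  rw [h1, Matrix.mul_apply]
  have h2 : ∀ j, (W * diagonal (fun j => (f j : ℂ))) i j * (star W) j i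
      = ((Complex.normSq (W i j) * f j : ℝ) : ℂ) := by
    intro j
    rw [Matrix.mul_diagonal, Matrix.star_apply]
    push_cast
    rw [show W i j * (f j : ℂ) * star (W i j) = W i j * star (W i j) * (f j : ℂ) by ring,
      Complex.star_def, Complex.mul_conj]
  rw [Finset.sum_congr rfl fun j _ => h2 j]
  push_cast
  rfl

lemma conjEntry_eq_dot (M U : Matrix (Fin d) (Fin d) ℂ) (i : Fin d) :
    (star U * M * U) i i
      = dotProduct (star (fun k => U k i)) (M *ᵥ (fun k => U k i)) := by
  simp only [Matrix.mul_apply, Matrix.star_apply, dotProduct, Matrix.mulVec,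
    Finset.sum_mul, Finset.mul_sum, Pi.star_apply]
  rw [Finset.sum_comm]
  exact Finset.sum_congr rfl fun l _ => Finset.sum_congr rfl fun k _ => by ring

lemma entry_re_le (M : Matrix (Fin d) (Fin d) ℂ) (v : Fin d → ℂ)
    (hv : ‖(WithLp.equiv 2 (Fin d → ℂ)).symm v‖ = 1) :
    |(dotProduct (star v) (M *ᵥ v)).re| ≤ ‖M‖ := by
  have h1 : (inner ℂ ((WithLp.equiv 2 (Fin d → ℂ)).symm v)
        ((WithLp.equiv 2 (Fin d → ℂ)).symm (M *ᵥ v)) : ℂ)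
      = dotProduct (star v) (M *ᵥ v) := by
    rw [dotProduct_comm]; rfl
  rw [← h1]
  refine le_trans (Complex.abs_re_le_norm _) ?_
  refine le_trans (norm_inner_le_norm _ _) ?_
  rw [hv, one_mul]
  have h2 := M.l2_opNorm_mulVec ((WithLp.equiv 2 (Fin d → ℂ)).symm v)
  rw [hv, mul_one] at h2
  exact h2

lemma key (A B : Matrix (Fin d) (Fin d) ℂ) (hA : A.IsHermitian) (hB : B.IsHermitian) :
    (∑ i, Real.exp (hA.eigenvalues i)) ≤
      Real.exp ‖A - B‖ * ∑ j, Real.exp (hB.eigenvalues j) := by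
  classical
  set U : Matrix (Fin d) (Fin d) ℂ := (hA.eigenvectorUnitary : Matrix (Fin d) (Fin d) ℂ) with hU
  set W : Matrix (Fin d) (Fin d) ℂ :=
    star U * (hB.eigenvectorUnitary : Matrix (Fin d) (Fin d) ℂ) with hWdef
  set c : Fin d → Fin d → ℝ := fun i j => Complex.normSq (W i j) with hc
  have hWu : W ∈ Matrix.unitaryGroup (Fin d) ℂ :=
    mul_mem (Unitary.star_mem hA.eigenvectorUnitary.2) hB.eigenvectorUnitary.2
  have hrow : ∀ i, ∑ j, c i j = 1 := by
    intro i
    have h1 : (W * star W) i i = 1 := by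
      rw [(Matrix.mem_unitaryGroup_iff).mp hWu]; simp [Matrix.one_apply]
    rw [Matrix.mul_apply] at h1
    have h2 : ∀ j, W i j * (star W) j i = ((c i j : ℝ) : ℂ) := fun j => by
      rw [Matrix.star_apply, Complex.star_def, Complex.mul_conj]
    rw [Finset.sum_congr rfl fun j _ => h2 j] at h1
    exact_mod_cast h1
  have hcol : ∀ j, ∑ i, c i j = 1 := by
    intro j
    have h1 : (star W * W) j j = 1 := by
      rw [(Matrix.mem_unitaryGroup_iff').mp hWu]; simp [Matrix.one_apply]
    rw [Matrix.mul_apply] at h1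
    have h2 : ∀ i, (star W) j i * W i j = ((c i j : ℝ) : ℂ) := fun i => by
      rw [Matrix.star_apply, Complex.star_def, mul_comm, Complex.mul_conj]
    rw [Finset.sum_congr rfl fun i _ => h2 i] at h1
    exact_mod_cast h1
  have hentryA : ∀ i, (star U * A * U) i i = ((hA.eigenvalues i : ℝ) : ℂ) := by
    intro i
    have hdiag := hA.conjStarAlgAut_star_eigenvectorUnitary
    rw [Unitary.conjStarAlgAut_star_apply] at hdiag
    rw [hU, hdiag]
    simp [RCLike.ofReal]
  have hentryB : ∀ i, (star U * B * U) i i = ((∑ j, c i j * hB.eigenvalues j : ℝ) : ℂ) := by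
    intro i
    have hBspec : B = (hB.eigenvectorUnitary : Matrix (Fin d) (Fin d) ℂ) *
        diagonal (fun j => ((hB.eigenvalues j : ℝ) : ℂ)) *
        star (hB.eigenvectorUnitary : Matrix (Fin d) (Fin d) ℂ)  := by
        have h := hB.spectral_theorem
        rw [Unitary.conjStarAlgAut_apply] at h
        exact h
    conv_lhs => rw [hBspec]
    exact conj_entry hA.eigenvectorUnitary hB.eigenvectorUnitary hB.eigenvalues i
  have hrem : ∀ i, hA.eigenvalues i - ∑ j, c i j * hB.eigenvalues j ≤ ‖A - B‖ := by
    intro i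
    have hd1 : ((star U * (A - B) * U) i i).re
        = hA.eigenvalues i - ∑ j, c i j * hB.eigenvalues j := by
      rw [Matrix.mul_sub, Matrix.sub_mul, Matrix.sub_apply, hentryA i, hentryB i]
      push_cast
      simp
    have hvn : ‖(WithLp.equiv 2 (Fin d → ℂ)).symm (fun k => U k i)‖ = 1 := by
      have hfun : (fun k => U k i) = ⇑(hA.eigenvectorBasis i) := by
        funext k
        exact hA.eigenvectorUnitary_apply k i
      rw [hfun]
      exact hA.eigenvectorBasis.orthonormal.1 i
    have hle := entry_re_le (A - B) (fun k => U k i) hvn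
    rw [← conjEntry_eq_dot] at hle
    rw [hd1] at hle
    exact (abs_le.mp hle).2
  have jensen : ∀ i, Real.exp (∑ j, c i j * hB.eigenvalues j)
      ≤ ∑ j, c i j * Real.exp (hB.eigenvalues j) := by
    intro i
    have := convexOn_exp.map_sum_le (t := Finset.univ) (w := c i) (p := hB.eigenvalues)
      (fun j _ => Complex.normSq_nonneg _) (hrow i) (fun j _ => Set.mem_univ _)
    simpa [smul_eq_mul] using this
  calc ∑ i, Real.exp (hA.eigenvalues i)
      ≤ ∑ i, Real.exp ‖A - B‖ * (∑ j, c i j * Real.exp (hB.eigenvalues j)) := by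
        refine Finset.sum_le_sum fun i _ => ?_
        have h1 : Real.exp (hA.eigenvalues i)
            ≤ Real.exp ‖A - B‖ * Real.exp (∑ j, c i j * hB.eigenvalues j) := by
          rw [← Real.exp_add]
          exact Real.exp_le_exp.2 (by linarith [hrem i])
        exact h1.trans (mul_le_mul_of_nonneg_left (jensen i) (Real.exp_nonneg _))
    _ = Real.exp ‖A - B‖ * ∑ j, Real.exp (hB.eigenvalues j) := by
        rw [← Finset.mul_sum]
        congr 1
        rw [Finset.sum_comm]
        refine Finset.sum_congr rfl fun j _ => ?_
        rw [← Finset.sum_mul, hcol j, one_mul]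

end TraceExpAux


theorem trace_exp_log_diff_le (d : ℕ) (hd : 1 ≤ d)
    (A B : Matrix (Fin d) (Fin d) ℂ) (hA : A.IsHermitian) (hB : B.IsHermitian) :
    (0 < (Matrix.trace (NormedSpace.exp A)).re ∧
      (Matrix.trace (NormedSpace.exp A)).im = 0) ∧
    (0 < (Matrix.trace (NormedSpace.exp B)).re ∧
      (Matrix.trace (NormedSpace.exp B)).im = 0) ∧
    |Real.log (Matrix.trace (NormedSpace.exp A)).re -
        Real.log (Matrix.trace (NormedSpace.exp B)).re| ≤ ‖A - B‖ := by
  have hTA := TraceExpAux.trace_exp_herm A hA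
  have hTB := TraceExpAux.trace_exp_herm B hB
  haveI : Nonempty (Fin d) := ⟨⟨0, hd⟩⟩
  have hApos : 0 < ∑ i, Real.exp (hA.eigenvalues i) :=
    Finset.sum_pos (fun i _ => Real.exp_pos _) Finset.univ_nonempty
  have hBpos : 0 < ∑ j, Real.exp (hB.eigenvalues j) :=
    Finset.sum_pos (fun j _ => Real.exp_pos _) Finset.univ_nonempty
  rw [hTA, hTB]
  simp only [Complex.ofReal_re, Complex.ofReal_im]
  refine ⟨⟨hApos, trivial⟩, ⟨hBpos, trivial⟩, ?_⟩
  rw [abs_sub_le_iff]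
  constructor
  · have hk := TraceExpAux.key A B hA hB
    have h2 : Real.log (∑ i, Real.exp (hA.eigenvalues i))
        ≤ ‖A - B‖ + Real.log (∑ j, Real.exp (hB.eigenvalues j)) := by
      calc Real.log (∑ i, Real.exp (hA.eigenvalues i))
          ≤ Real.log (Real.exp ‖A - B‖ * ∑ j, Real.exp (hB.eigenvalues j)) :=
            Real.log_le_log hApos hk
        _ = ‖A - B‖ + Real.log (∑ j, Real.exp (hB.eigenvalues j)) := by
            rw [Real.log_mul (Real.exp_ne_zero _) (ne_of_gt hBpos), Real.log_exp]
    linarith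
  · have hk := TraceExpAux.key B A hB hA
    rw [norm_sub_rev] at hk
    have h2 : Real.log (∑ j, Real.exp (hB.eigenvalues j))
        ≤ ‖A - B‖ + Real.log (∑ i, Real.exp (hA.eigenvalues i)) := by
      calc Real.log (∑ j, Real.exp (hB.eigenvalues j))
          ≤ Real.log (Real.exp ‖A - B‖ * ∑ i, Real.exp (hA.eigenvalues i)) :=
            Real.log_le_log hBpos hk
        _ = ‖A - B‖ + Real.log (∑ i, Real.exp (hA.eigenvalues i)) := by
            rw [Real.log_mul (Real.exp_ne_zero _) (ne_of_gt hApos), Real.log_exp]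
    linarith
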